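/- Let K be a field, L/K a field extension such that k' ⊗_K L is an integral domain for every field extension k' of K (L/K regular), and R a Noetherian K-algebra. Set S = R ⊗_K L. Then for every zero-divisor h ∈ S there exists a nonzero r ∈ R with r·h = 0. -/

import Mathlib

universe u v w

open scoped TensorProduct

section Core

variable {K : Type u} [Field K] {A : Type v} [CommRing A] [Algebra K A]
variable {R : Type w} [CommRing R] [Algebra K R]
variable {ι : Type*} (bA : Module.Basis ι K A)

/-- coordinate characterization of extended ideals in `R ⊗[K] A`. -/
theorem coord_mem (J : Ideal R) (v : R ⊗[K] A) :
    v ∈ J.map (algebraMap R (R ⊗[K] A)) ↔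
      ∀ i, (Algebra.TensorProduct.basis R bA).repr v i ∈ J := by
  set b := Algebra.TensorProduct.basis R bA with hb
  constructor
  · intro hv i
    have hv' : v ∈ J • (⊤ : Submodule R (R ⊗[K] A)) := by
      rw [Ideal.smul_top_eq_map]; exact hv
    refine Submodule.smul_induction_on hv' ?_ ?_
    · intro a ha x _
      rw [map_smul, Finsupp.smul_apply, smul_eq_mul]
      exact J.mul_mem_right _ ha
    · intro x y hx hy
      rw [map_add, Finsupp.add_apply]
      exact J.add_mem hx hy
  · intro hv
    have hrepr := b.linearCombination_repr v
    rw [Finsupp.linearCombination_apply] at hrepr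
    rw [← hrepr]
    refine Submodule.sum_mem _ fun i hi => ?_
    show (b.repr v i) • b i ∈ _
    rw [Algebra.smul_def]
    exact Ideal.mul_mem_right _ _ (Ideal.mem_map_of_mem _ (hv i))

/-- base change commutes with coordinates -/
theorem theta_repr (p : Ideal R) (v : R ⊗[K] A) (i : ι) :
    (Algebra.TensorProduct.basis (R ⧸ p) bA).repr
        ((Algebra.TensorProduct.map (Ideal.Quotient.mkₐ K p) (AlgHom.id K A)) v) i =
      Ideal.Quotient.mk p ((Algebra.TensorProduct.basis R bA).repr v i) := by
  induction v using TensorProduct.induction_on with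
  | zero => simp
  | tmul r a =>
      simp only [Algebra.TensorProduct.map_tmul, AlgHom.coe_id, id_eq,
        Algebra.TensorProduct.basis_repr_tmul, Finsupp.smul_apply, Finsupp.mapRange_apply,
        smul_eq_mul, Ideal.Quotient.mkₐ_eq_mk, map_mul]
      congr 1
  | add x y hx hy => simp [map_add, hx, hy]

theorem prime_map (p : Ideal R) (hdom : IsDomain ((R ⧸ p) ⊗[K] A)) (v w : R ⊗[K] A)
    (hvw : v * w ∈ p.map (algebraMap R (R ⊗[K] A))) :
    v ∈ p.map (algebraMap R (R ⊗[K] A)) ∨ w ∈ p.map (algebraMap R (R ⊗[K] A)) := by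
  have bA := Module.Basis.ofVectorSpace K A
  set θ := Algebra.TensorProduct.map (Ideal.Quotient.mkₐ K p) (AlgHom.id K A)
  have hker : ∀ u : R ⊗[K] A, θ u = 0 ↔ u ∈ p.map (algebraMap R (R ⊗[K] A)) := by
    intro u
    rw [coord_mem bA]
    constructor
    · intro h i
      have := theta_repr bA p u i
      rw [h, map_zero, Finsupp.zero_apply] at this
      exact (Ideal.Quotient.eq_zero_iff_mem).mp this.symm
    · intro h
      have : (Algebra.TensorProduct.basis (R ⧸ p) bA).repr (θ u) = 0 := by
        ext i
        rw [Finsupp.zero_apply, theta_repr bA p u i, Ideal.Quotient.eq_zero_iff_mem]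
        exact h i
      exact ((Algebra.TensorProduct.basis (R ⧸ p) bA).repr.map_eq_zero_iff).mp this
  rw [← hker] at hvw ⊢
  rw [← hker]
  have : θ v * θ w = 0 := by rw [← map_mul]; exact hvw
  exact mul_eq_zero.mp this

theorem filt [IsNoetherianRing R]
    (hdom : ∀ p : Ideal R, p.IsPrime → IsDomain ((R ⧸ p) ⊗[K] A))
    (P : Ideal (R ⊗[K] A)) (hP : P.IsPrime) (y : R ⊗[K] A) (hy0 : y ≠ 0)
    (hann : ∀ a, a ∈ P ↔ a * y = 0) :
    ∃ q : Ideal R, P = q.map (algebraMap R (R ⊗[K] A)) := by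
  have bA := Module.Basis.ofVectorSpace K A
  set T : Set (Ideal R) := {J | ∀ Pi : Ideal (R ⊗[K] A), Pi.IsPrime → ∀ yi : R ⊗[K] A, yi ≠ 0 →
      yi ∈ J.map (algebraMap R (R ⊗[K] A)) → (∀ a, a ∈ Pi ↔ a * yi = 0) →
      ∃ q : Ideal R, Pi = q.map (algebraMap R (R ⊗[K] A))} with hT
  have hbot : ⊥ ∈ T := by
    intro Pi hPi yi hyi0 hyiJ _
    rw [Ideal.map_bot, Ideal.mem_bot] at hyiJ
    exact absurd hyiJ hyi0
  obtain ⟨J, hJT, hJmax⟩ : ∃ J : Ideal R, J ∈ T ∧ ∀ I ∈ T, ¬J < I := by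
    obtain ⟨J0, h1, h2⟩ := set_has_maximal_iff_noetherian.mpr ‹IsNoetherianRing R› T ⟨⊥, hbot⟩
    exact ⟨J0, h1, h2⟩
  have hJtop : J = ⊤ := by
    by_contra hJne
    haveI := Ideal.Quotient.nontrivial_iff.mpr hJne
    obtain ⟨p, hpprime, xbar, hpx⟩ := (associatedPrimes.nonempty R (R ⧸ J)).imp fun _ h => isAssociatedPrime_iff.mp h
    obtain ⟨x, rfl⟩ := Ideal.Quotient.mk_surjective xbar
    have hcolon : ∀ a : R, a ∈ p ↔ a * x ∈ J := by
      intro a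
      rw [hpx, Submodule.mem_colon_singleton, Submodule.mem_bot, Algebra.smul_def,
        Ideal.Quotient.algebraMap_eq, ← map_mul, Ideal.Quotient.eq_zero_iff_mem]
    have hxJ : x ∉ J := by
      intro hx
      have h0 : Ideal.Quotient.mk J x = 0 := Ideal.Quotient.eq_zero_iff_mem.mpr hx
      rw [h0] at hpx
      have h1 : (1 : R) ∈ p := by
        rw [hpx, Submodule.mem_colon_singleton, Submodule.mem_bot]; simp
      exact hpprime.ne_top ((Ideal.eq_top_iff_one _).mpr h1)
    set J' := J ⊔ Ideal.span {x} with hJ'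
    have hJ'T : J' ∈ T := by
      intro Pi hPi yi hyi0 hyiJ' hanni
      by_cases hcase : ∃ t, t * yi ≠ 0 ∧ t * yi ∈ J.map (algebraMap R (R ⊗[K] A))
      · obtain ⟨t, hty0, htyJ⟩ := hcase
        refine hJT Pi hPi (t * yi) hty0 htyJ ?_
        intro a
        constructor
        · intro ha
          have h2 : a * yi = 0 := (hanni a).mp ha
          calc a * (t * yi) = t * (a * yi) := by ring
          _ = 0 := by rw [h2, mul_zero]
        · intro ha
          have hat : a * t ∈ Pi := (hanni _).mpr (by rw [mul_assoc]; exact ha)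
          rcases hPi.mem_or_mem hat with h | h
          · exact h
          · exact absurd ((hanni t).mp h) hty0
      · push_neg at hcase
        have hzero : ∀ t, t * yi ∈ J.map (algebraMap R (R ⊗[K] A)) → t * yi = 0 := by
          intro t ht
          by_contra h0
          exact hcase t h0 ht
        have hyJm : yi ∉ J.map (algebraMap R (R ⊗[K] A)) := by
          intro hy
          have h3 := hzero 1 (by simpa using hy)
          rw [one_mul] at h3
          exact hyi0 h3
        rw [hJ', Ideal.map_sup] at hyiJ'
        obtain ⟨u, hu, v, hv, rfl⟩ := Submodule.mem_sup.mp hyiJ'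
        rw [Ideal.map_span, Set.image_singleton, Ideal.mem_span_singleton'] at hv
        obtain ⟨w, rfl⟩ := hv
        set X := algebraMap R (R ⊗[K] A) x with hX
        have hcolS : ∀ v' : R ⊗[K] A, X * v' ∈ J.map (algebraMap R (R ⊗[K] A)) →
            v' ∈ p.map (algebraMap R (R ⊗[K] A)) := by
          intro v' hXv
          have hsm : X * v' = x • v' := (Algebra.smul_def x v').symm
          rw [hsm, coord_mem bA] at hXv
          rw [coord_mem bA]
          intro i
          have h6 := hXv i
          rw [LinearEquiv.map_smul, Finsupp.smul_apply, smul_eq_mul] at h6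
          exact (hcolon _).mpr (by rwa [mul_comm])
        have hcolS' : ∀ v' ∈ p.map (algebraMap R (R ⊗[K] A)),
            X * v' ∈ J.map (algebraMap R (R ⊗[K] A)) := by
          intro v' hv'
          have hsm : X * v' = x • v' := (Algebra.smul_def x v').symm
          rw [coord_mem bA] at hv'
          rw [hsm, coord_mem bA]
          intro i
          rw [LinearEquiv.map_smul, Finsupp.smul_apply, smul_eq_mul, mul_comm]
          exact (hcolon _).mp (hv' i)
        by_cases hw : w ∈ p.map (algebraMap R (R ⊗[K] A))
        · exfalso
          apply hyJm
          have h4 : w * X = X * w := mul_comm _ _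
          exact Ideal.add_mem _ hu (h4 ▸ hcolS' w hw)
        · refine ⟨p, ?_⟩
          ext g
          constructor
          · intro hg
            have hgy : g * (u + w * X) = 0 := (hanni g).mp hg
            have h1 : X * (g * w) ∈ J.map (algebraMap R (R ⊗[K] A)) := by
              have h5 : X * (g * w) = -(g * u) := by linear_combination hgy
              rw [h5]
              exact neg_mem (Ideal.mul_mem_left _ g hu)
            rcases prime_map p (hdom p hpprime) g w (hcolS _ h1) with h | h
            · exact h
            · exact absurd h hw
          · intro hg
            apply (hanni g).mpr
            apply hzero
            have h2 : g * (u + w * X) = g * u + X * (g * w) := by ring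
            rw [h2]
            exact Ideal.add_mem _ (Ideal.mul_mem_left _ g hu)
              (hcolS' _ (Ideal.mul_mem_right _ _ hg))
    apply hJmax J' hJ'T
    refine lt_of_le_of_ne le_sup_left ?_
    intro hEq
    apply hxJ
    rw [hEq, hJ']
    exact Ideal.mem_sup_right (Ideal.subset_span rfl)
  refine hJT P hP y hy0 ?_ hann
  rw [hJtop, Ideal.map_top]
  trivial

theorem main_aux [IsNoetherianRing R] [IsNoetherianRing (R ⊗[K] A)]
    (hdom : ∀ p : Ideal R, p.IsPrime → IsDomain ((R ⧸ p) ⊗[K] A))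
    (g z : R ⊗[K] A) (hz0 : z ≠ 0) (hgz : g * z = 0) :
    ∃ b : R, b ≠ 0 ∧ b • g = 0 := by
  have bA := Module.Basis.ofVectorSpace K A
  set M := LinearMap.ker ((LinearMap.mul (R ⊗[K] A) (R ⊗[K] A)) g) with hM
  have hzM : z ∈ M := by
    rw [hM, LinearMap.mem_ker, LinearMap.mul_apply']
    exact hgz
  haveI : Nontrivial M := by
    refine nontrivial_of_ne ⟨z, hzM⟩ 0 ?_
    intro h
    exact hz0 (by simpa using congrArg Subtype.val h)
  obtain ⟨P, hPprime, xm, hPx⟩ := (associatedPrimes.nonempty (R ⊗[K] A) M).imp fun _ h => isAssociatedPrime_iff.mp h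
  set y := (xm : R ⊗[K] A) with hy
  have hann : ∀ a, a ∈ P ↔ a * y = 0 := by
    intro a
    rw [hPx, Submodule.mem_colon_singleton, Submodule.mem_bot]
    constructor
    · intro h
      have := congrArg Subtype.val h
      simpa [smul_eq_mul] using this
    · intro h
      ext
      simpa [smul_eq_mul] using h
  have hy0 : y ≠ 0 := by
    intro h0
    apply hPprime.ne_top
    rw [Ideal.eq_top_iff_one]
    rw [hann, h0, mul_zero]
  have hgP : g ∈ P := by
    rw [hann]
    have h7 : ((LinearMap.mul (R ⊗[K] A) (R ⊗[K] A)) g) y = 0 := LinearMap.mem_ker.mp xm.2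
    rw [LinearMap.mul_apply'] at h7
    exact h7
  obtain ⟨q, hq⟩ := filt hdom P hPprime y hy0 hann
  have hrepr_ne : (Algebra.TensorProduct.basis R bA).repr y ≠ 0 := by
    intro h
    exact hy0 (((Algebra.TensorProduct.basis R bA).repr.map_eq_zero_iff).mp h)
  obtain ⟨i₀, hi₀⟩ := Finsupp.ne_iff.mp hrepr_ne
  rw [Finsupp.zero_apply] at hi₀
  refine ⟨(Algebra.TensorProduct.basis R bA).repr y i₀, hi₀, ?_⟩
  have hqb : ∀ a ∈ q, a * (Algebra.TensorProduct.basis R bA).repr y i₀ = 0 := by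
    intro a ha
    have h1 : algebraMap R (R ⊗[K] A) a ∈ P := by
      rw [hq]
      exact Ideal.mem_map_of_mem _ ha
    have h2 : a • y = 0 := by
      rw [Algebra.smul_def]
      exact (hann _).mp h1
    have h3 := congrArg (fun t => (Algebra.TensorProduct.basis R bA).repr t i₀) h2
    simpa [LinearEquiv.map_smul, Finsupp.smul_apply, smul_eq_mul] using h3
  have hgq : ∀ i, (Algebra.TensorProduct.basis R bA).repr g i ∈ q := by
    rw [← coord_mem bA, ← hq]
    exact hgP
  apply ((Algebra.TensorProduct.basis R bA).repr.map_eq_zero_iff).mp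
  ext i
  rw [LinearEquiv.map_smul, Finsupp.smul_apply, smul_eq_mul, Finsupp.zero_apply, mul_comm]
  exact hqb _ (hgq i)

end Core

section Fiber

variable {K : Type u} [Field K] {L : Type v} [Field L] [Algebra K L]
variable {R : Type w} [CommRing R] [Algebra K R]

set_option synthInstance.maxHeartbeats 1000000 in
set_option maxHeartbeats 2000000 in
theorem fiber_domain
    (hreg : ∀ (k' : Type w) [Field k'] [Algebra K k'], IsDomain (k' ⊗[K] L))
    (L₀ : Subalgebra K L) (p : Ideal R) (hp : p.IsPrime) :
    IsDomain ((R ⧸ p) ⊗[K] ↥L₀) := by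
  haveI := hp
  haveI hD : IsDomain (FractionRing (R ⧸ p) ⊗[K] L) := hreg (FractionRing (R ⧸ p))
  let ψ : (R ⧸ p) →ₐ[K] FractionRing (R ⧸ p) :=
    { toRingHom := algebraMap (R ⧸ p) (FractionRing (R ⧸ p)), commutes' := fun _ => rfl }
  let φ₁ : (R ⧸ p) ⊗[K] ↥L₀ →ₐ[K] FractionRing (R ⧸ p) ⊗[K] ↥L₀ :=
    Algebra.TensorProduct.map ψ (AlgHom.id K ↥L₀)
  let φ₂ : FractionRing (R ⧸ p) ⊗[K] ↥L₀ →ₐ[K] FractionRing (R ⧸ p) ⊗[K] L :=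
    Algebra.TensorProduct.map (AlgHom.id K (FractionRing (R ⧸ p))) L₀.val
  have h₁ : Function.Injective φ₁ := by
    have heq : ⇑φ₁ = ⇑(LinearMap.rTensor (↥L₀) ψ.toLinearMap) := by
      funext xx
      induction xx using TensorProduct.induction_on with
      | zero => simp
      | tmul r a => simp [φ₁, LinearMap.rTensor_tmul]
      | add u v hu hv => simp only [map_add, hu, hv]
    rw [heq]
    exact Module.Flat.rTensor_preserves_injective_linearMap _
      (IsFractionRing.injective (R ⧸ p) (FractionRing (R ⧸ p)))
  have h₂ : Function.Injective φ₂ := by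
    have heq : ⇑φ₂ = ⇑(LinearMap.lTensor (FractionRing (R ⧸ p)) (L₀.val.toLinearMap)) := by
      funext xx
      induction xx using TensorProduct.induction_on with
      | zero => simp
      | tmul r a => simp [φ₂, LinearMap.lTensor_tmul]
      | add u v hu hv => simp only [map_add, hu, hv]
    rw [heq]
    exact Module.Flat.lTensor_preserves_injective_linearMap _ Subtype.val_injective
  exact Function.Injective.isDomain (φ₂.toRingHom.comp φ₁.toRingHom)
    (by exact h₂.comp h₁)

end Fiber

set_option synthInstance.maxHeartbeats 1000000 in
set_option maxHeartbeats 4000000 in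
open scoped TensorProduct in
/-- Let `L/K` be a regular field extension (i.e. `k' ⊗_K L` is a domain for every
field extension `k'` of `K`) and `R` a Noetherian `K`-algebra. Then every
zero-divisor of `S = R ⊗_K L` is annihilated by a nonzero element of `R`. -/
theorem stmt_15 (K : Type u) [Field K] (L : Type v) [Field L] [Algebra K L]
    (R : Type w) [CommRing R] [IsNoetherianRing R] [Algebra K R]
    (hreg : ∀ (k' : Type w) [Field k'] [Algebra K k'], IsDomain (k' ⊗[K] L)) :
    ∀ h : R ⊗[K] L, (∃ s : R ⊗[K] L, s ≠ 0 ∧ h * s = 0) →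
      ∃ r : R, r ≠ 0 ∧ r • h = 0 := by
  classical
  rintro h ⟨s, hs0, hmul⟩
  obtain ⟨T₁, hT₁⟩ := TensorProduct.exists_finset h
  obtain ⟨T₂, hT₂⟩ := TensorProduct.exists_finset s
  set L₀ : Subalgebra K L := Algebra.adjoin K (↑((T₁ ∪ T₂).image Prod.snd) : Set L) with hL₀
  have hmem : ∀ i ∈ T₁ ∪ T₂, (i : R × L).2 ∈ L₀ := fun i hi =>
    Algebra.subset_adjoin (Finset.mem_coe.mpr (Finset.mem_image_of_mem Prod.snd hi))
  haveI : Algebra.FiniteType K ↥L₀ :=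
    (Subalgebra.fg_iff_finiteType L₀).mp (Subalgebra.fg_adjoin_finset _)
  haveI : IsNoetherianRing (R ⊗[K] ↥L₀) := Algebra.FiniteType.isNoetherianRing R _
  let ι₀ : R ⊗[K] ↥L₀ →ₐ[R] R ⊗[K] L := Algebra.TensorProduct.map (AlgHom.id R R) L₀.val
  have hinj : Function.Injective ι₀ := by
    have heq : ⇑ι₀ = ⇑(LinearMap.lTensor R (L₀.val.toLinearMap)) := by
      funext xx
      induction xx using TensorProduct.induction_on with
      | zero => simp
      | tmul r a => simp [ι₀, LinearMap.lTensor_tmul]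
      | add u v hu hv => simp only [map_add, hu, hv]
    rw [heq]
    exact Module.Flat.lTensor_preserves_injective_linearMap _ Subtype.val_injective
  let h₀ : R ⊗[K] ↥L₀ := ∑ i ∈ T₁.attach,
    (i : R × L).1 ⊗ₜ[K] (⟨(i : R × L).2, hmem _ (Finset.mem_union_left _ i.2)⟩ : ↥L₀)
  let s₀ : R ⊗[K] ↥L₀ := ∑ i ∈ T₂.attach,
    (i : R × L).1 ⊗ₜ[K] (⟨(i : R × L).2, hmem _ (Finset.mem_union_right _ i.2)⟩ : ↥L₀)
  have hι₀h : ι₀ h₀ = h := by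
    rw [hT₁, ← Finset.sum_attach T₁ (fun i => i.1 ⊗ₜ[K] i.2)]
    rw [map_sum]
    refine Finset.sum_congr rfl fun i _ => ?_
    simp [ι₀]
  have hι₀s : ι₀ s₀ = s := by
    rw [hT₂, ← Finset.sum_attach T₂ (fun i => i.1 ⊗ₜ[K] i.2)]
    rw [map_sum]
    refine Finset.sum_congr rfl fun i _ => ?_
    simp [ι₀]
  have hs₀ne : s₀ ≠ 0 := fun h0 => hs0 (by rw [← hι₀s, h0, map_zero])
  have hprod : h₀ * s₀ = 0 := hinj (by rw [map_mul, hι₀h, hι₀s, hmul, map_zero])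
  obtain ⟨b, hb0, hbh⟩ :=
    main_aux (fun p hp => fiber_domain hreg L₀ p hp) h₀ s₀ hs₀ne hprod
  refine ⟨b, hb0, ?_⟩
  rw [← hι₀h, ← map_smul, hbh, map_zero]
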